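/- Let N ≥ 2, let r_{ij} (i ≠ j) be real numbers, let m_i > 0 for all i, let Δt > 0, and let ũ ∈ ℝ^N. Then the limited antidiffusive term of Zalesak's limiter satisfies, for every i, the two-sided bound m_i Q_i^- ≤ Δt ∑_{j≠i} α_{ij} r_{ij} ≤ m_i Q_i^+. -/

import Mathlib

noncomputable section

/-- For `N ≥ 2`, the set of indices different from `i` is nonempty. -/
lemma eraseUnivNonempty {N : ℕ} (hN : 2 ≤ N) (i : Fin N) :
    ((Finset.univ : Finset (Fin N)).erase i).Nonempty := by
  rw [← Finset.card_pos, Finset.card_erase_of_mem (Finset.mem_univ i), Finset.card_univ,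
    Fintype.card_fin]
  omega

/-- For `N ≥ 1`, `Fin N` is nonempty as a finset. -/
lemma univNonempty {N : ℕ} (hN : 1 ≤ N) :
    (Finset.univ : Finset (Fin N)).Nonempty := by
  rw [← Finset.card_pos, Finset.card_univ, Fintype.card_fin]
  omega

/-- `P_i^+ = ∑_{j ≠ i} max{r_{ij}, 0}`. -/
def Pp {N : ℕ} (r : Fin N → Fin N → ℝ) (i : Fin N) : ℝ :=
  ∑ j ∈ Finset.univ.erase i, max (r i j) 0

/-- `P_i^- = ∑_{j ≠ i} min{r_{ij}, 0}`. -/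
def Pm {N : ℕ} (r : Fin N → Fin N → ℝ) (i : Fin N) : ℝ :=
  ∑ j ∈ Finset.univ.erase i, min (r i j) 0

/-- `Q_i^+ = max{0, max_{j ≠ i} (ũ_j - ũ_i)}`. -/
def Qp {N : ℕ} (hN : 2 ≤ N) (u : Fin N → ℝ) (i : Fin N) : ℝ :=
  max 0 ((Finset.univ.erase i).sup' (eraseUnivNonempty hN i) fun j => u j - u i)

/-- `Q_i^- = min{0, min_{j ≠ i} (ũ_j - ũ_i)}`. -/
def Qm {N : ℕ} (hN : 2 ≤ N) (u : Fin N → ℝ) (i : Fin N) : ℝ :=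
  min 0 ((Finset.univ.erase i).inf' (eraseUnivNonempty hN i) fun j => u j - u i)

/-- `R_i^+ = min{1, m_i Q_i^+ / (Δt P_i^+)}`, with `R_i^+ = 1` if `P_i^+ = 0`. -/
def Rp {N : ℕ} (hN : 2 ≤ N) (r : Fin N → Fin N → ℝ) (m : Fin N → ℝ) (Δt : ℝ)
    (u : Fin N → ℝ) (i : Fin N) : ℝ :=
  if Pp r i = 0 then 1 else min 1 (m i * Qp hN u i / (Δt * Pp r i))

/-- `R_i^- = min{1, m_i Q_i^- / (Δt P_i^-)}`, with `R_i^- = 1` if `P_i^- = 0`. -/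
def Rm {N : ℕ} (hN : 2 ≤ N) (r : Fin N → Fin N → ℝ) (m : Fin N → ℝ) (Δt : ℝ)
    (u : Fin N → ℝ) (i : Fin N) : ℝ :=
  if Pm r i = 0 then 1 else min 1 (m i * Qm hN u i / (Δt * Pm r i))

/-- Zalesak's correction factors. -/
def zalesakAlpha {N : ℕ} (hN : 2 ≤ N) (r : Fin N → Fin N → ℝ) (m : Fin N → ℝ)
    (Δt : ℝ) (u : Fin N → ℝ) (i j : Fin N) : ℝ :=
  if 0 < r i j then min (Rp hN r m Δt u i) (Rm hN r m Δt u j)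
  else min (Rm hN r m Δt u i) (Rp hN r m Δt u j)

lemma Qp_nonneg {N : ℕ} (hN : 2 ≤ N) (u : Fin N → ℝ) (i : Fin N) : 0 ≤ Qp hN u i :=
  le_max_left _ _

lemma Qm_nonpos {N : ℕ} (hN : 2 ≤ N) (u : Fin N → ℝ) (i : Fin N) : Qm hN u i ≤ 0 :=
  min_le_left _ _

lemma Pp_nonneg {N : ℕ} (r : Fin N → Fin N → ℝ) (i : Fin N) : 0 ≤ Pp r i :=
  Finset.sum_nonneg fun j _ => le_max_right _ _

lemma Pm_nonpos {N : ℕ} (r : Fin N → Fin N → ℝ) (i : Fin N) : Pm r i ≤ 0 :=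
  Finset.sum_nonpos fun j _ => min_le_right _ _

lemma Rp_nonneg {N : ℕ} (hN : 2 ≤ N) (r : Fin N → Fin N → ℝ) (m : Fin N → ℝ) (Δt : ℝ)
    (hm : ∀ i, 0 < m i) (hΔt : 0 < Δt) (u : Fin N → ℝ) (i : Fin N) :
    0 ≤ Rp hN r m Δt u i := by
  unfold Rp
  split
  · norm_num
  · rename_i h
    have hP : 0 < Pp r i := lt_of_le_of_ne (Pp_nonneg r i) (Ne.symm h)
    refine le_min (by norm_num) ?_
    exact div_nonneg (mul_nonneg (hm i).le (Qp_nonneg hN u i)) (mul_nonneg hΔt.le hP.le)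

lemma Rp_le_one {N : ℕ} (hN : 2 ≤ N) (r : Fin N → Fin N → ℝ) (m : Fin N → ℝ) (Δt : ℝ)
    (u : Fin N → ℝ) (i : Fin N) : Rp hN r m Δt u i ≤ 1 := by
  unfold Rp; split
  · exact le_rfl
  · exact min_le_left _ _

lemma Rm_nonneg {N : ℕ} (hN : 2 ≤ N) (r : Fin N → Fin N → ℝ) (m : Fin N → ℝ) (Δt : ℝ)
    (hm : ∀ i, 0 < m i) (hΔt : 0 < Δt) (u : Fin N → ℝ) (i : Fin N) :
    0 ≤ Rm hN r m Δt u i := by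
  unfold Rm
  split
  · norm_num
  · rename_i h
    have hP : Pm r i < 0 := lt_of_le_of_ne (Pm_nonpos r i) h
    refine le_min (by norm_num) ?_
    rw [div_nonneg_iff]
    right
    exact ⟨mul_nonpos_of_nonneg_of_nonpos (hm i).le (Qm_nonpos hN u i),
      mul_nonpos_of_nonneg_of_nonpos hΔt.le hP.le⟩

lemma Rm_le_one {N : ℕ} (hN : 2 ≤ N) (r : Fin N → Fin N → ℝ) (m : Fin N → ℝ) (Δt : ℝ)
    (u : Fin N → ℝ) (i : Fin N) : Rm hN r m Δt u i ≤ 1 := by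
  unfold Rm; split
  · exact le_rfl
  · exact min_le_left _ _

lemma Rp_mul_Pp_le {N : ℕ} (hN : 2 ≤ N) (r : Fin N → Fin N → ℝ) (m : Fin N → ℝ) (Δt : ℝ)
    (hm : ∀ i, 0 < m i) (hΔt : 0 < Δt) (u : Fin N → ℝ) (i : Fin N) :
    Δt * (Rp hN r m Δt u i * Pp r i) ≤ m i * Qp hN u i := by
  unfold Rp
  split
  · rename_i h
    rw [h]
    simp only [mul_zero]
    exact mul_nonneg (hm i).le (Qp_nonneg hN u i)
  · rename_i h
    have hP : 0 < Pp r i := lt_of_le_of_ne (Pp_nonneg r i) (Ne.symm h)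
    have h1 : min 1 (m i * Qp hN u i / (Δt * Pp r i)) ≤ m i * Qp hN u i / (Δt * Pp r i) :=
      min_le_right _ _
    have hΔP : 0 < Δt * Pp r i := mul_pos hΔt hP
    calc Δt * (min 1 (m i * Qp hN u i / (Δt * Pp r i)) * Pp r i)
        ≤ Δt * (m i * Qp hN u i / (Δt * Pp r i) * Pp r i) := by
          apply mul_le_mul_of_nonneg_left _ hΔt.le
          exact mul_le_mul_of_nonneg_right h1 hP.le
      _ = m i * Qp hN u i := by field_simp
    
lemma le_Rm_mul_Pm {N : ℕ} (hN : 2 ≤ N) (r : Fin N → Fin N → ℝ) (m : Fin N → ℝ) (Δt : ℝ)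
    (hm : ∀ i, 0 < m i) (hΔt : 0 < Δt) (u : Fin N → ℝ) (i : Fin N) :
    m i * Qm hN u i ≤ Δt * (Rm hN r m Δt u i * Pm r i) := by
  unfold Rm
  split
  · rename_i h
    rw [h]
    simp only [mul_zero]
    exact mul_nonpos_of_nonneg_of_nonpos (hm i).le (Qm_nonpos hN u i)
  · rename_i h
    have hP : Pm r i < 0 := lt_of_le_of_ne (Pm_nonpos r i) h
    have h1 : min 1 (m i * Qm hN u i / (Δt * Pm r i)) ≤ m i * Qm hN u i / (Δt * Pm r i) :=
      min_le_right _ _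
    have hΔP : Δt * Pm r i < 0 := mul_neg_of_pos_of_neg hΔt hP
    calc m i * Qm hN u i
        = Δt * (m i * Qm hN u i / (Δt * Pm r i) * Pm r i) := by field_simp
      _ ≤ Δt * (min 1 (m i * Qm hN u i / (Δt * Pm r i)) * Pm r i) := by
          apply mul_le_mul_of_nonneg_left _ hΔt.le
          exact mul_le_mul_of_nonpos_right h1 hP.le

/-- Two-sided bound on the limited antidiffusive term of Zalesak's limiter. -/
theorem zalesak_limited_antidiffusion_bounds
    (N : ℕ) (hN : 2 ≤ N) (r : Fin N → Fin N → ℝ)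
    (m : Fin N → ℝ) (hm : ∀ i, 0 < m i) (Δt : ℝ) (hΔt : 0 < Δt) (u : Fin N → ℝ) :
    ∀ i, m i * Qm hN u i ≤ Δt * ∑ j ∈ Finset.univ.erase i, zalesakAlpha hN r m Δt u i j * r i j ∧
      Δt * ∑ j ∈ Finset.univ.erase i, zalesakAlpha hN r m Δt u i j * r i j ≤ m i * Qp hN u i := by
  intro i
  have halpha_nonneg : ∀ j, 0 ≤ zalesakAlpha hN r m Δt u i j := by
    intro j
    unfold zalesakAlpha
    split
    · exact le_min (Rp_nonneg hN r m Δt hm hΔt u i) (Rm_nonneg hN r m Δt hm hΔt u j)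
    · exact le_min (Rm_nonneg hN r m Δt hm hΔt u i) (Rp_nonneg hN r m Δt hm hΔt u j)
  constructor
  · -- lower bound
    calc m i * Qm hN u i
        ≤ Δt * (Rm hN r m Δt u i * Pm r i) := le_Rm_mul_Pm hN r m Δt hm hΔt u i
      _ = Δt * ∑ j ∈ Finset.univ.erase i, Rm hN r m Δt u i * min (r i j) 0 := by
          rw [Pm, Finset.mul_sum]
      _ ≤ Δt * ∑ j ∈ Finset.univ.erase i, zalesakAlpha hN r m Δt u i j * r i j := by
          apply mul_le_mul_of_nonneg_left _ hΔt.le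
          apply Finset.sum_le_sum
          intro j _
          by_cases hr : 0 < r i j
          · rw [min_eq_right hr.le]
            simp only [mul_zero]
            exact mul_nonneg (halpha_nonneg j) hr.le
          · push_neg at hr
            rw [min_eq_left hr]
            have hle : zalesakAlpha hN r m Δt u i j ≤ Rm hN r m Δt u i := by
              unfold zalesakAlpha
              rw [if_neg (not_lt.mpr hr)]
              exact min_le_left _ _
            exact mul_le_mul_of_nonpos_right hle hr
  · -- upper bound
    calc Δt * ∑ j ∈ Finset.univ.erase i, zalesakAlpha hN r m Δt u i j * r i j
        ≤ Δt * ∑ j ∈ Finset.univ.erase i, Rp hN r m Δt u i * max (r i j) 0 := by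
          apply mul_le_mul_of_nonneg_left _ hΔt.le
          apply Finset.sum_le_sum
          intro j _
          by_cases hr : 0 < r i j
          · rw [max_eq_left hr.le]
            have hle : zalesakAlpha hN r m Δt u i j ≤ Rp hN r m Δt u i := by
              unfold zalesakAlpha
              rw [if_pos hr]
              exact min_le_left _ _
            exact mul_le_mul_of_nonneg_right hle hr.le
          · push_neg at hr
            rw [max_eq_right hr]
            simp only [mul_zero]
            exact mul_nonpos_of_nonneg_of_nonpos (halpha_nonneg j) hr
      _ = Δt * (Rp hN r m Δt u i * Pp r i) := by
          rw [Pp, ← Finset.mul_sum]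
      _ ≤ m i * Qp hN u i := Rp_mul_Pp_le hN r m Δt hm hΔt u i
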